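/- arXiv:2002.03965 — 9 statements merged into one kernel-verified Lean document; each statement's English description precedes it below -/
import Mathlib

section
/- For any palindrome w and any p with 1 ≤ p ≤ |w|, the following are equivalent: (1) p is a period of w; (2) there exist palindromes u, v with |u·v| = p such that w = (u·v)^k · u for some k ≥ 1; (3) the suffix w[p..|w|-1] obtained by deleting the first p letters of w is a palindrome. -/
/-- `p` is a period of `w`: letters at distance `p` agree. -/
def HasPeriod {α : Type*} (w : List α) (p : ℕ) : Prop :=
  ∀ i : ℕ, i + p < w.length → w[i]? = w[i + p]?

/-- The minimal period of `w`. -/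
noncomputable def minPeriod {α : Type*} (w : List α) : ℕ :=
  sInf {p : ℕ | 0 < p ∧ HasPeriod w p}

/-- `k`-th power of a list: `k` concatenated copies of `w`. -/
def listPow {α : Type*} (w : List α) (k : ℕ) : List α := (List.replicate k w).flatten

/-- `s` admits a factorization into exactly `k` nonempty palindromes. -/
def HasPalFact {α : Type*} (s : List α) (k : ℕ) : Prop :=
  ∃ L : List (List α), L.length = k ∧ L.flatten = s ∧ ∀ w ∈ L, w ≠ [] ∧ w.reverse = w

/-- Palindromic length: minimum number of nonempty palindromic factors (`pl ε = 0`). -/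
noncomputable def pl {α : Type*} (s : List α) : ℕ := sInf {k : ℕ | HasPalFact s k}

/-- `plParity j s` : minimum `k ≡ j (mod 2)` with a palindromic `k`-factorization, `⊤` if none. -/
noncomputable def plParity {α : Type*} (j : ℕ) (s : List α) : ℕ∞ :=
  sInf {n : ℕ∞ | ∃ k : ℕ, n = (k : ℕ∞) ∧ k % 2 = j ∧ HasPalFact s k}

/-- The set of nonempty palindromic suffixes of `s` with minimal period exactly `p`
(the `p`-series of `s`). -/
def pSeries {α : Type*} (s : List α) (p : ℕ) : Set (List α) :=
  {w | w <:+ s ∧ w ≠ [] ∧ w.reverse = w ∧ minPeriod w = p}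


section PalAux
variable {α : Type*}

lemma listPow_succ (x : List α) (k : ℕ) : listPow x (k+1) = x ++ listPow x k := by
  rw [listPow, listPow, List.replicate_succ, List.flatten_cons]

lemma listPow_length (x : List α) (k : ℕ) : (listPow x k).length = k * x.length := by
  induction k with
  | zero => simp [listPow]
  | succ k ih => rw [listPow_succ, List.length_append, ih]; ring

lemma listPow_add (x : List α) (a b : ℕ) : listPow x (a+b) = listPow x a ++ listPow x b := by
  rw [listPow, listPow, listPow, List.replicate_add, List.flatten_append]

lemma listPow_one (x : List α) : listPow x 1 = x := by
  rw [listPow]; simp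

lemma listPow_getElem? (x : List α) (k i : ℕ) (hi : i < k * x.length) :
    (listPow x k)[i]? = x[i % x.length]? := by
  induction k generalizing i with
  | zero => exact absurd hi (by simp)
  | succ k ih =>
    have hmul : (k+1) * x.length = k * x.length + x.length := by ring
    rw [listPow_succ]
    by_cases hc : i < x.length
    · rw [List.getElem?_append_left hc, Nat.mod_eq_of_lt hc]
    · push_neg at hc
      rw [List.getElem?_append_right hc, ih _ (by omega)]
      congr 1
      conv_rhs => rw [show i = (i - x.length) + x.length by omega, Nat.add_mod_right]

lemma hasPeriod_iterate {w : List α} {p : ℕ} (h : HasPeriod w p) :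
    ∀ j i, i + j * p < w.length → w[i]? = w[i + j * p]? := by
  intro j
  induction j with
  | zero => simp
  | succ j ih =>
    intro i hi
    have hj : (j+1) * p = j * p + p := by ring
    have h1 : i + j * p < w.length := by omega
    rw [ih i h1, h (i + j * p) (by omega)]
    congr 1
    omega

lemma listPow_pow_prefix (u v : List α) (k : ℕ) :
    listPow (u ++ v) k ++ u <+: listPow (u ++ v) (k+1) := by
  induction k with
  | zero =>
    rw [listPow_one]
    simp [listPow]
  | succ k ih =>
    obtain ⟨t, ht⟩ := ih
    refine ⟨t, ?_⟩
    rw [listPow_succ, listPow_succ (u ++ v) (k+1), List.append_assoc, List.append_assoc]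
    congr 1
    rw [← List.append_assoc, ht]

end PalAux

/-- for a palindrome `w` and `1 ≤ p ≤ |w|`, the conditions
(1) `p` is a period of `w`, (2) `w = (uv)^k u` for palindromes `u,v` with `|uv| = p`, `k ≥ 1`,
(3) `w` with its first `p` letters deleted is a palindrome, are all equivalent. -/
theorem palindrome_period_iff {α : Type*} (w : List α) (p : ℕ)
    (hw : w.reverse = w) (hp1 : 1 ≤ p) (hp2 : p ≤ w.length) :
    (HasPeriod w p ↔ ∃ (u v : List α) (k : ℕ), 1 ≤ k ∧ u.reverse = u ∧ v.reverse = v ∧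
        (u ++ v).length = p ∧ w = listPow (u ++ v) k ++ u) ∧
    (HasPeriod w p ↔ (w.drop p).reverse = w.drop p) := by
  have hpal : ∀ i : ℕ, i < w.length → w[i]? = w[w.length - 1 - i]? := by
    intro i hi
    conv_lhs => rw [← hw]
    exact List.getElem?_reverse hi
  constructor
  · constructor
    · intro hper
      set n := w.length with hn
      set r := n % p with hrdef
      set k := n / p with hkdef
      have hrp : r < p := Nat.mod_lt _ (by omega)
      have hnk : k * p + r = n := by rw [hkdef, hrdef, Nat.mul_comm]; exact Nat.div_add_mod n p
      have hk1 : 1 ≤ k := (Nat.one_le_div_iff (by omega)).mpr hp2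
      have hple : p ≤ k * p := by
        calc p = 1 * p := (Nat.one_mul p).symm
        _ ≤ k * p := Nat.mul_le_mul_right p hk1
      have hA : (k - 1) * p + p = k * p := by rw [Nat.sub_one_mul]; omega
      set x := w.take p with hxdef
      set u := w.take r with hudef
      set v := (w.take p).drop r with hvdef
      have hxlen : x.length = p := by rw [hxdef, List.length_take]; omega
      have hulen : u.length = r := by rw [hudef, List.length_take]; omega
      have huv : u ++ v = x := by
        rw [hudef, hvdef, hxdef, show w.take r = (w.take p).take r by
          rw [List.take_take]; congr 1; omega]
        exact List.take_append_drop r (w.take p)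
      have hweq : w = listPow x k ++ u := by
        apply List.ext_getElem?
        intro i
        have hlenR : (listPow x k ++ u).length = n := by
          rw [List.length_append, listPow_length, hxlen, hulen]; omega
        by_cases hi : i < n
        · by_cases hc : i < k * p
          · rw [List.getElem?_append_left (by rw [listPow_length, hxlen]; omega),
              listPow_getElem? x k i (by rw [hxlen]; omega)]
            rw [hxlen, hxdef, List.getElem?_take, if_pos (Nat.mod_lt _ (by omega))]
            have := hasPeriod_iterate hper (i / p) (i % p)
              (by rw [Nat.mod_add_div']; omega)
            rw [Nat.mod_add_div'] at this
            exact this.symm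
          · push_neg at hc
            rw [List.getElem?_append_right (by rw [listPow_length, hxlen]; omega)]
            rw [listPow_length, hxlen, hudef, List.getElem?_take, if_pos (by omega)]
            have := hasPeriod_iterate hper k (i - k * p) (by omega)
            rw [show i - k * p + k * p = i by omega] at this
            exact this.symm
        · rw [List.getElem?_eq_none (by omega), List.getElem?_eq_none (by rw [hlenR]; omega)]
      have hk' : k = (k - 1) + 1 := by omega
      have hsuffix : w.drop (n - p) = v ++ u := by
        have hstr : w = listPow x (k-1) ++ (x ++ u) := by
          rw [hweq]
          conv_lhs => rw [hk']
          rw [listPow_add, List.append_assoc, listPow_one]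
        rw [show n - p = (k-1) * p + r by omega, ← List.drop_drop, hstr,
          show (k-1) * p = (listPow x (k-1)).length by rw [listPow_length, hxlen],
          List.drop_left]
        rw [← huv, List.append_assoc, show r = u.length from hulen.symm, List.drop_left]
      have hrevsuf : (w.drop (n - p)).reverse = u ++ v := by
        rw [List.reverse_drop, hw, show n - (n - p) = p by omega, ← hxdef, huv]
      rw [hsuffix, List.reverse_append] at hrevsuf
      obtain ⟨hu, hv⟩ := List.append_inj hrevsuf (by simp)
      exact ⟨u, v, k, hk1, hu, hv, by rw [huv, hxlen], by rw [huv, ← hweq]⟩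
    · rintro ⟨u, v, k, hk1, hu, hv, hlen, heq⟩
      set x := u ++ v with hxdef
      have hk' : k = (k - 1) + 1 := by omega
      have hA : (k - 1) * p + p = k * p := by
        rw [Nat.sub_one_mul]
        have : p ≤ k * p := by
          calc p = 1 * p := (Nat.one_mul p).symm
          _ ≤ k * p := Nat.mul_le_mul_right p hk1
        omega
      have hpre : listPow x (k-1) ++ u <+: w := by
        calc listPow x (k-1) ++ u <+: listPow x k := by
              rw [hk']; exact listPow_pow_prefix u v (k-1)
        _ <+: listPow x k ++ u := List.prefix_append _ _
        _ = w := heq.symm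
      have hnlen : w.length = k * p + u.length := by
        rw [heq, List.length_append, listPow_length, hlen]
      intro i hi
      have hilen : i < (listPow x (k-1) ++ u).length := by
        rw [List.length_append, listPow_length, hlen]
        omega
      obtain ⟨t, ht⟩ := hpre
      have h1 : w[i]? = (listPow x (k-1) ++ u)[i]? := by
        rw [← ht, List.getElem?_append_left hilen]
      have h2 : w[i + p]? = (listPow x (k-1) ++ u)[i]? := by
        conv_lhs => rw [heq, hk', listPow_succ, List.append_assoc]
        rw [List.getElem?_append_right (by rw [hlen]; omega)]
        congr 1
        rw [hlen]
        omega
      rw [h1, h2]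
  · constructor
    · intro hper
      apply List.ext_getElem?
      intro i
      have hdl : (w.drop p).length = w.length - p := by simp
      by_cases hi : i < w.length - p
      · rw [List.getElem?_reverse (by simp; omega), List.getElem?_drop, List.getElem?_drop, hdl]
        rw [show p + (w.length - p - 1 - i) = w.length - 1 - i by omega]
        rw [← hpal i (by omega)]
        rw [show p + i = i + p by omega]
        exact hper i (by omega)
      · rw [List.getElem?_eq_none (by simp; omega), List.getElem?_eq_none (by simp; omega)]
    · intro hpd i hi
      have hdl : (w.drop p).length = w.length - p := by simp
      have h1 : w[i + p]? = (w.drop p)[i]? := by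
        rw [List.getElem?_drop]; congr 1; omega
      have h2 : (w.drop p)[i]? = (w.drop p)[w.length - p - 1 - i]? := by
        conv_lhs => rw [← hpd]
        rw [List.getElem?_reverse (by simp; omega), hdl]
      rw [h1, h2, List.getElem?_drop, show p + (w.length - p - 1 - i) = w.length - 1 - i by omega,
        ← hpal i (by omega)]
end

section
/- For any palindrome w and any p with 1 ≤ p ≤ |w|: p is a period of w if and only if the prefix w[0..|w|-p-1] obtained by deleting the last p letters of w is a palindrome. -/
lemma pal_iff_getElem {α : Type*} (l : List α) :
    l.reverse = l ↔ ∀ i (h : i < l.length), l[i] = l[l.length - 1 - i]'(by omega) := by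
  constructor
  · intro h i hi
    apply Option.some.inj
    rw [← List.getElem?_eq_getElem, ← List.getElem?_eq_getElem]
    conv_lhs => rw [← h]
    rw [List.getElem?_reverse hi]
  · intro h
    apply List.ext_getElem (by simp)
    intro i h1 h2
    rw [List.getElem_reverse]
    exact (h i h2).symm

/-- for a palindrome `w` and `1 ≤ p ≤ |w|`, `p` is a period of `w` iff
the prefix of `w` obtained by deleting the last `p` letters is a palindrome. -/
theorem palindrome_period_iff_prefix_palindrome {α : Type*} (w : List α) (p : ℕ)
    (hw : w.reverse = w) (hp1 : 1 ≤ p) (hp2 : p ≤ w.length) :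
    HasPeriod w p ↔ (w.take (w.length - p)).reverse = w.take (w.length - p) := by
  set m := w.length - p with hm
  have hlen : (w.take m).length = m := by simp [List.length_take]; omega
  rw [pal_iff_getElem]
  constructor
  · intro hper i hi
    rw [hlen] at hi
    apply Option.some.inj
    rw [← List.getElem?_eq_getElem, ← List.getElem?_eq_getElem]
    rw [List.getElem?_take_of_lt hi, List.getElem?_take_of_lt (show (w.take m).length - 1 - i < m by omega)]
    rw [hper i (by omega)]
    conv_lhs => rw [← hw]
    rw [List.getElem?_reverse (by omega)]
    congr 1
    omega
  · intro hpal i h1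
    have hi : i < m := by omega
    have h2 := hpal i (by omega)
    have h2' : (w.take m)[i]? = (w.take m)[(w.take m).length - 1 - i]? := by
      rw [List.getElem?_eq_getElem (by omega), List.getElem?_eq_getElem (by rw [hlen]; omega), h2]
    rw [List.getElem?_take_of_lt hi, List.getElem?_take_of_lt (show (w.take m).length - 1 - i < m by omega)] at h2'
    rw [h2']
    conv_rhs => rw [← hw]
    rw [List.getElem?_reverse h1]
    congr 1
    omega
end

section
/- If w is a palindrome and w = (u·v)^k·u where k ≥ 1, u and v are palindromes, and |u·v| is the minimal period of w, then the center of any subpalindrome x of w with |x| ≥ |u·v| - 1 coincides with the center of one of the occurrences of u or v in the decomposition (u·v)^k·u. -/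
lemma periodic_getElem_mod {α : Type*} (w : List α) (p : ℕ) (hp : 0 < p)
    (h : HasPeriod w p) : ∀ a, a < w.length → w[a]? = w[a % p]? := by
  intro a
  induction a using Nat.strong_induction_on with
  | _ a ih =>
    intro ha
    rcases lt_or_ge a p with h1 | h1
    · rw [Nat.mod_eq_of_lt h1]
    · have hlt : a - p < a := Nat.sub_lt (lt_of_lt_of_le hp h1) hp
      have h2 := ih (a - p) hlt (by omega)
      have hper := h (a - p) (by omega)
      rw [Nat.sub_add_cancel h1] at hper
      rw [← hper, h2]
      congr 1
      exact (Nat.mod_eq_sub_mod h1).symm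

/-- if the palindrome `w = (uv)^k u` (`k ≥ 1`, `u`, `v` palindromes,
`|uv|` the minimal period of `w`), then every subpalindrome occurrence `w[i..j]` of length
`≥ |uv| - 1` has the same center (doubled center `i + j`) as one of the occurrences of `u`
(at positions `m·|uv|`, `0 ≤ m ≤ k`) or of `v` (at positions `m·|uv| + |u|`, `0 ≤ m < k`)
in the decomposition. -/
theorem subpalindrome_center_in_periodic_palindrome {α : Type*} (u v w : List α) (k : ℕ)
    (hk : 1 ≤ k) (hu : u.reverse = u) (hv : v.reverse = v) (hw : w.reverse = w)
    (hdecomp : w = listPow (u ++ v) k ++ u)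
    (hmin : minPeriod w = (u ++ v).length)
    (i j : ℕ) (hij : i ≤ j) (hj : j < w.length)
    (hx : ((w.drop i).take (j - i + 1)).reverse = (w.drop i).take (j - i + 1))
    (hlen : (u ++ v).length - 1 ≤ j - i + 1) :
    ∃ m : ℕ,
      (m ≤ k ∧ (i + j : ℤ) = 2 * (m * (u ++ v).length) + u.length - 1) ∨
      (m < k ∧ (i + j : ℤ) = 2 * (m * (u ++ v).length + u.length) + v.length - 1) := by
  simp only [minPeriod] at hmin
  set p := (u ++ v).length with hpdef
  set N := w.length with hNdef
  -- the set of periods is nonempty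
  have hSne : {q : ℕ | 0 < q ∧ HasPeriod w q}.Nonempty :=
    ⟨N + 1, by omega, fun a ha => absurd ha (by omega)⟩
  have hpS : p ∈ {q : ℕ | 0 < q ∧ HasPeriod w q} := hmin ▸ Nat.sInf_mem hSne
  obtain ⟨hp, hper⟩ := hpS
  have hminimal : ∀ q, 0 < q → HasPeriod w q → p ≤ q := fun q h1 h2 =>
    hmin ▸ Nat.sInf_le ⟨h1, h2⟩
  haveI : NeZero p := ⟨hp.ne'⟩
  have hN : N = k * p + u.length := by
    rw [hNdef, hdecomp]
    simp only [List.length_append, listPow, List.length_flatten, List.map_replicate,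
      List.sum_replicate, smul_eq_mul, hpdef]
  have hpN : p ≤ N := by
    have : p ≤ k * p := Nat.le_mul_of_pos_left p hk
    omega
  have hup : u.length ≤ p := by
    rw [hpdef]; simp
  -- the letter function on residues
  set f : ZMod p → Option α := fun r => w[r.val]? with hfdef
  have hf : ∀ a, a < N → w[a]? = f ((a : ℕ) : ZMod p) := by
    intro a ha
    have h1 := periodic_getElem_mod w p hp hper a ha
    simp only [hfdef, ZMod.val_natCast]
    exact h1
  -- symmetry from w palindrome
  have wrev : ∀ a, a < N → w[a]? = w[N - 1 - a]? := by
    intro a ha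
    conv_lhs => rw [← hw]
    rw [List.getElem?_reverse (by simpa using ha)]
  have hsym : ∀ r : ZMod p, f r = f (((N - 1 : ℕ) : ZMod p) - r) := by
    intro r
    have hrv : r.val < N := lt_of_lt_of_le (ZMod.val_lt r) hpN
    have h2 : ((N - 1 - r.val : ℕ) : ZMod p) = ((N - 1 : ℕ) : ZMod p) - r := by
      rw [Nat.cast_sub (by omega : r.val ≤ N - 1), ZMod.natCast_rightInverse r]
    calc f r = w[r.val]? := rfl
      _ = w[N - 1 - r.val]? := wrev r.val hrv
      _ = f ((N - 1 - r.val : ℕ) : ZMod p) := hf _ (by omega)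
      _ = f (((N - 1 : ℕ) : ZMod p) - r) := by rw [h2]
  -- subpalindrome symmetry
  have xelem : ∀ t, t ≤ j - i → w[i + t]? = w[j - t]? := by
    intro t ht
    set x := (w.drop i).take (j - i + 1) with hxdef
    have hxlen : x.length = j - i + 1 := by
      rw [hxdef, List.length_take, List.length_drop]; omega
    have h1 : ∀ s, s ≤ j - i → x[s]? = w[i + s]? := by
      intro s hs
      rw [hxdef, List.getElem?_take, if_pos (by omega), List.getElem?_drop]
    have h2 : x[t]? = x[j - i - t]? := by
      conv_lhs => rw [← hx]
      rw [List.getElem?_reverse (by omega), hxlen]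
      congr 1
    rw [← h1 t ht, h2, h1 (j - i - t) (by omega)]
    congr 1
    omega
  have hxZ : ∀ t, t ≤ j - i →
      f ((i + t : ℕ) : ZMod p) = f (((i + j : ℕ) : ZMod p) - ((i + t : ℕ) : ZMod p)) := by
    intro t ht
    have h1 := xelem t ht
    rw [hf (i + t) (by omega), hf (j - t) (by omega)] at h1
    rw [h1]
    congr 1
    rw [Nat.cast_sub (by omega : t ≤ j)]
    push_cast
    ring
  -- main claim : centers agree mod p
  have hCD : ((i + j : ℕ) : ZMod p) = ((N - 1 : ℕ) : ZMod p) := by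
    by_contra hne
    set C : ZMod p := ((i + j : ℕ) : ZMod p) with hCdef
    set D : ZMod p := ((N - 1 : ℕ) : ZMod p) with hDdef
    set e : ZMod p := D - C with hedef
    have he : e ≠ 0 := sub_ne_zero.mpr (Ne.symm hne)
    have hp2 : 2 ≤ p := by
      by_contra h2
      have hp1 : p = 1 := by omega
      have : Subsingleton (ZMod p) := by rw [hp1]; infer_instance
      exact hne (Subsingleton.elim _ _)
    set r0 : ZMod p := ((i : ℕ) : ZMod p) - 1 with hr0def
    have stepA : ∀ s : ZMod p, s ≠ r0 → f s = f (s + e) := by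
      intro s hs
      set t := (s - ((i : ℕ) : ZMod p)).val with htdef
      have hts : ((i : ℕ) : ZMod p) + (t : ZMod p) = s := by
        rw [htdef, ZMod.natCast_rightInverse]
        ring
      have htp : t < p := ZMod.val_lt _
      have ht2 : t ≤ p - 2 := by
        rcases Nat.lt_or_ge t (p - 1) with h1 | h1
        · omega
        · exfalso
          have ht1 : t = p - 1 := by omega
          apply hs
          rw [← hts, ht1, Nat.cast_sub (by omega : 1 ≤ p), ZMod.natCast_self, hr0def]
          ring
      have ht3 : t ≤ j - i := by omega
      have h1 := hxZ t ht3
      rw [Nat.cast_add, hts] at h1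
      rw [h1, hsym (C - s)]
      congr 1
      rw [hedef, hCdef, hDdef]
      ring
    set n := addOrderOf e with hndef
    have hn : 0 < n := addOrderOf_pos e
    have hn1 : n ≠ 1 := by
      intro h1
      have h2 := addOrderOf_nsmul_eq_zero e
      rw [← hndef, h1, one_nsmul] at h2
      exact he h2
    have hchain : ∀ m, 1 ≤ m → m ≤ n → f (r0 + e) = f (r0 + m • e) := by
      intro m
      induction m with
      | zero => omega
      | succ m ih =>
        intro h1 h2
        rcases Nat.eq_zero_or_pos m with hm0 | hm0
        · subst hm0; simp
        · have ihm := ih hm0 (by omega)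
          rw [ihm]
          have hne0 : m • e ≠ 0 := by
            intro h0
            have hd := addOrderOf_dvd_of_nsmul_eq_zero h0
            have := Nat.le_of_dvd hm0 hd
            omega
          have hA := stepA (r0 + m • e) (by
            intro hh
            exact hne0 (by
              have : r0 + m • e = r0 + 0 := by rw [hh]; ring
              exact add_left_cancel this))
          rw [hA]
          congr 1
          rw [succ_nsmul]
          ring
    have hr0e : f r0 = f (r0 + e) := by
      have h1 := hchain n hn le_rfl
      rw [h1, hndef, addOrderOf_nsmul_eq_zero e, add_zero]
    have hall : ∀ s : ZMod p, f s = f (s + e) := by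
      intro s
      by_cases hs : s = r0
      · rw [hs]; exact hr0e
      · exact stepA s hs
    have hev1 : 0 < e.val := by
      rcases Nat.eq_zero_or_pos e.val with h0 | h0
      · exact absurd ((ZMod.val_eq_zero e).mp h0) he
      · exact h0
    have hev2 : e.val < p := ZMod.val_lt e
    have hperiod : HasPeriod w e.val := by
      intro a ha
      rw [hf a (by omega), hf (a + e.val) ha, Nat.cast_add,
        ZMod.natCast_rightInverse e]
      exact hall _
    have := hminimal e.val hev1 hperiod
    omega
  -- final arithmetic
  have hmodeq : (i + j) ≡ (N - 1) [MOD p] := (ZMod.natCast_eq_natCast_iff _ _ _).mp hCD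
  obtain ⟨d, hd⟩ := hmodeq.dvd
  have hN1 : ((N - 1 : ℕ) : ℤ) = (k : ℤ) * p + u.length - 1 := by
    have h1 : 1 ≤ N := by omega
    have h2 : (N : ℤ) = (k : ℤ) * p + u.length := by exact_mod_cast hN
    omega
  set P : ℤ := (p : ℤ) with hPdef
  set U : ℤ := (u.length : ℤ) with hUdef
  have hPpos : 0 < P := by rw [hPdef]; exact_mod_cast hp
  have hUP : U ≤ P := by rw [hPdef, hUdef]; exact_mod_cast hup
  have hUpos : 0 ≤ U := by rw [hUdef]; positivity
  have hPV : P = U + (v.length : ℤ) := by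
    rw [hPdef, hUdef, hpdef, List.length_append]; push_cast; ring
  set q : ℤ := (k : ℤ) - d with hqdef
  have hq : (i + j : ℤ) = q * P + U - 1 := by
    have h5 : ((N - 1 : ℕ) : ℤ) - ((i + j : ℕ) : ℤ) = (p : ℤ) * d := hd
    rw [hN1] at h5
    have h6 : ((i + j : ℕ) : ℤ) = (i : ℤ) + (j : ℤ) := by push_cast; ring
    rw [h6] at h5
    have h7 : q * P = (k : ℤ) * P - (p : ℤ) * d := by rw [hqdef, hPdef]; ring
    have h8 : (k : ℤ) * (p : ℤ) = (k : ℤ) * P := by rw [hPdef]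
    linarith
  have hq0 : 0 ≤ q := by
    by_contra hq0
    push_neg at hq0
    have h1 : q ≤ -1 := by omega
    have h2 : q * P ≤ -1 * P := mul_le_mul_of_nonneg_right h1 hPpos.le
    have h3 : (0 : ℤ) ≤ (i + j : ℤ) := by positivity
    linarith
  have hbound : (i + j : ℤ) ≤ 2 * (k : ℤ) * P + 2 * U - 2 := by
    have h1 : (j : ℤ) ≤ (N : ℤ) - 1 := by
      have h0 : j + 1 ≤ N := hj
      omega
    have h2 : (i : ℤ) ≤ (j : ℤ) := by exact_mod_cast hij
    have h3 : (N : ℤ) = (k : ℤ) * P + U := by rw [hPdef, hUdef]; exact_mod_cast hN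
    linarith
  rcases Int.even_or_odd q with ⟨m, hm⟩ | ⟨m, hm⟩
  · -- q = 2m : center of an occurrence of u
    have hm0 : 0 ≤ m := by have h := hq0; rw [hm] at h; omega
    have hmk : m ≤ (k : ℤ) := by
      by_contra hmk
      push_neg at hmk
      have h1 : (k : ℤ) + 1 ≤ m := by omega
      have h2 : ((k : ℤ) + 1) * P ≤ m * P := mul_le_mul_of_nonneg_right h1 hPpos.le
      have h3 : (i + j : ℤ) = 2 * (m * P) + U - 1 := by rw [hq, hm]; ring
      linarith
    refine ⟨m.toNat, Or.inl ⟨?_, ?_⟩⟩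
    · have := Int.toNat_le.mpr hmk
      exact_mod_cast this
    · rw [hq, hm]
      push_cast [Int.toNat_of_nonneg hm0]
      ring
  · -- q = 2m+1 : center of an occurrence of v
    have hm0 : 0 ≤ m := by have h := hq0; rw [hm] at h; omega
    have hmk : m < (k : ℤ) := by
      by_contra hmk
      push_neg at hmk
      have h2 : (k : ℤ) * P ≤ m * P := mul_le_mul_of_nonneg_right hmk hPpos.le
      have h3 : (i + j : ℤ) = 2 * (m * P) + P + U - 1 := by rw [hq, hm]; ring
      linarith
    refine ⟨m.toNat, Or.inr ⟨?_, ?_⟩⟩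
    · have h1 : m.toNat < (k : ℤ) := by rwa [Int.toNat_of_nonneg hm0]
      exact_mod_cast h1
    · have : (i + j : ℤ) = 2 * (m * P + U) + (P - U) - 1 := by rw [hq, hm]; ring
      rw [this]
      push_cast [Int.toNat_of_nonneg hm0]
      rw [hPV]
      ring
end

section
/- Any palindromic factorization of a string s into k nonempty palindromic factors with k ≤ |s| - 2 can be transformed into a palindromic factorization of s into k+2 nonempty palindromic factors. Consequently, s admits a factorization into exactly k nonempty palindromes if and only if the minimum number of factors of the same parity as k in a palindromic factorization of s is at most k. -/

lemma split3 {α : Type*} {w : List α} (h : 3 ≤ w.length) (hpal : w.reverse = w) :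
    ∃ a m, w = a :: m ++ [a] ∧ m ≠ [] ∧ m.reverse = m := by
  match w, h with
  | a :: t, h =>
    obtain ⟨m, b, rfl⟩ := (t.eq_nil_or_concat).resolve_left (by rintro rfl; simp at h)
    simp only [List.concat_eq_append, List.reverse_cons, List.reverse_append,
      List.reverse_singleton, List.cons_append, List.singleton_append] at hpal h ⊢
    obtain ⟨h1, hm2⟩ := List.cons_eq_cons.mp hpal
    subst h1
    have hm : m.reverse = m := by
      have := List.append_inj_left' hm2 (by simp)
      simpa using this
    refine ⟨b, m, rfl, ?_, hm⟩
    rintro rfl; simp at h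

lemma split2 {α : Type*} {w : List α} (h : w.length = 2) (hpal : w.reverse = w) :
    ∃ a, w = [a, a] := by
  match w, h with
  | [a, b], _ =>
    simp only [List.reverse_cons, List.reverse_nil, List.nil_append, List.cons_append,
      List.cons.injEq, List.singleton_append] at hpal
    exact ⟨a, by simp [hpal.1]⟩

lemma exists_big {α : Type*} {L : List (List α)}
    (hlt : L.length < (L.map List.length).sum) :
    ∃ w ∈ L, 2 ≤ w.length := by
  by_contra hc
  push_neg at hc
  have h1 : (L.map List.length).sum ≤ (L.map List.length).length • 1 := by
    apply List.sum_le_card_nsmul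
    intro x hx
    simp only [List.mem_map] at hx
    obtain ⟨w, hw, rfl⟩ := hx
    exact Nat.lt_succ_iff.mp (hc w hw)
  simp at h1
  omega

lemma step2 {α : Type*} {s : List α} {L : List (List α)} (hflat : L.flatten = s)
    (hall : ∀ w ∈ L, w ≠ [] ∧ w.reverse = w) (hle : ∀ w ∈ L, w.length ≤ 2)
    (hlt : L.length < s.length) :
    ∃ M : List (List α), M.length = L.length + 1 ∧ M.flatten = s ∧
      (∀ w ∈ M, w ≠ [] ∧ w.reverse = w) ∧ ∀ w ∈ M, w.length ≤ 2 := by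
  have hsum : (L.map List.length).sum = s.length := by
    rw [← hflat]; exact (List.length_flatten).symm
  obtain ⟨w, hw, hw2⟩ := exists_big (L := L) (by omega)
  have hw2' : w.length = 2 := le_antisymm (hle w hw) hw2
  obtain ⟨a, rfl⟩ := split2 hw2' (hall _ hw).2
  obtain ⟨L1, L2, rfl⟩ := List.append_of_mem hw
  refine ⟨L1 ++ [a] :: [a] :: L2, by simp; omega, ?_, ?_, ?_⟩
  · rw [← hflat]; simp
  · intro v hv
    simp only [List.mem_append, List.mem_cons] at hv
    rcases hv with h | rfl | rfl | h
    · exact hall v (by simp [h])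
    · exact ⟨by simp, by simp⟩
    · exact ⟨by simp, by simp⟩
    · exact hall v (by simp [h])
  · intro v hv
    simp only [List.mem_append, List.mem_cons] at hv
    rcases hv with h | rfl | rfl | h
    · exact hle v (by simp [h])
    · simp
    · simp
    · exact hle v (by simp [h])

lemma palExtend {α : Type*} {s : List α} {k : ℕ} (h : k + 2 ≤ s.length)
    (hf : HasPalFact s k) : HasPalFact s (k + 2) := by
  obtain ⟨L, hlen, hflat, hall⟩ := hf
  by_cases h3 : ∃ w ∈ L, 3 ≤ w.length
  · obtain ⟨w, hw, hw3⟩ := h3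
    obtain ⟨a, m, rfl, hm, hmp⟩ := split3 hw3 (hall _ hw).2
    obtain ⟨L1, L2, rfl⟩ := List.append_of_mem hw
    refine ⟨L1 ++ [a] :: m :: [a] :: L2, by simp at hlen ⊢; omega, ?_, ?_⟩
    · rw [← hflat]; simp
    · intro v hv
      simp only [List.mem_append, List.mem_cons] at hv
      rcases hv with h | rfl | rfl | rfl | h
      · exact hall v (by simp [h])
      · exact ⟨by simp, by simp⟩
      · exact ⟨hm, hmp⟩
      · exact ⟨by simp, by simp⟩
      · exact hall v (by simp [h])
  · push_neg at h3
    have hle : ∀ w ∈ L, w.length ≤ 2 := fun w hw => by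
      have := h3 w hw; omega
    obtain ⟨M, hM1, hM2, hM3, hM4⟩ := step2 hflat hall hle (by omega)
    obtain ⟨N, hN1, hN2, hN3, _⟩ := step2 hM2 hM3 hM4 (by omega)
    exact ⟨N, by omega, hN2, hN3⟩

lemma palReach {α : Type*} {s : List α} (d : ℕ) : ∀ k', HasPalFact s k' →
    k' + 2 * d ≤ s.length → HasPalFact s (k' + 2 * d) := by
  induction d with
  | zero => intro k' h _; simpa using h
  | succ d ih =>
    intro k' h hle
    have h1 : HasPalFact s (k' + 2 * d) := ih k' h (by omega)
    have heq : k' + 2 * (d + 1) = (k' + 2 * d) + 2 := by ring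
    rw [heq]
    exact palExtend (by omega) h1

/-- a palindromic `k`-factorization with `k ≤ |s| - 2` extends to a
`(k+2)`-factorization; consequently (for `k ≤ |s|`, as forced by nonempty factors)
`s` has a palindromic `k`-factorization iff the minimum number of factors of the parity of
`k` in a palindromic factorization of `s` is at most `k`. -/
theorem palFact_extend_and_parity_criterion {α : Type*} (s : List α) :
    (∀ k : ℕ, k + 2 ≤ s.length → HasPalFact s k → HasPalFact s (k + 2)) ∧
    (∀ k : ℕ, k ≤ s.length → (HasPalFact s k ↔ plParity (k % 2) s ≤ (k : ℕ∞))) := by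
  refine ⟨fun k h hf => palExtend h hf, ?_⟩
  intro k hk
  constructor
  · intro hf
    exact sInf_le ⟨k, rfl, rfl, hf⟩
  · intro h
    have hne : {n : ℕ∞ | ∃ k' : ℕ, n = (k' : ℕ∞) ∧ k' % 2 = k % 2 ∧ HasPalFact s k'}.Nonempty := by
      by_contra hemp
      rw [Set.not_nonempty_iff_eq_empty] at hemp
      rw [plParity, hemp, sInf_empty] at h
      simp at h
    have hmem := csInf_mem hne
    obtain ⟨k', hk'eq, hk'par, hk'f⟩ := hmem
    have hle : (k' : ℕ∞) ≤ (k : ℕ∞) := by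
      rw [← hk'eq]; exact le_trans (le_of_eq rfl) h
    have hle' : k' ≤ k := by exact_mod_cast hle
    obtain ⟨d, rfl⟩ : ∃ d, k = k' + 2 * d := ⟨(k - k') / 2, by omega⟩
    exact palReach d k' hk'f hk
end

section
/- If a string s has a palindromic factorization into k nonempty palindromes with k ≤ |s| - 2, then s has a palindromic factorization into k+2 nonempty palindromes. -/
lemma pal_split {α : Type*} (w : List α) (hp : w.reverse = w) (h3 : 3 ≤ w.length) :
    ∃ a u, w = [a] ++ u ++ [a] ∧ u ≠ [] ∧ u.reverse = u := by
  match w, h3 with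
  | a :: t, h3 =>
    rcases List.eq_nil_or_concat t with rfl | ⟨u, b, hb⟩
    · simp at h3
    · rw [List.concat_eq_append] at hb; subst hb
      have hrev : (a :: (u ++ [b])).reverse = b :: (u.reverse ++ [a]) := by simp
      rw [hrev] at hp
      injection hp with h1 h2
      subst h1
      have hu : u.reverse = u := List.append_inj_left' h2 (by simp)
      refine ⟨b, u, by simp, ?_, hu⟩
      rintro rfl
      simp at h3

lemma pal_two {α : Type*} (w : List α) (hp : w.reverse = w) (h2 : w.length = 2) :
    ∃ a, w = [a, a] := by
  match w, h2 with
  | [a, b], _ =>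
    simp only [List.reverse_cons, List.reverse_nil, List.nil_append, List.singleton_append,
      List.cons.injEq] at hp
    exact ⟨a, by simp [hp.1]⟩

lemma lemA {α : Type*} (L : List (List α)) (hall : ∀ v ∈ L, v ≠ [] ∧ v.reverse = v)
    (h : ∃ w ∈ L, 3 ≤ w.length) :
    ∃ L' : List (List α), L'.length = L.length + 2 ∧ L'.flatten = L.flatten ∧
      ∀ v ∈ L', v ≠ [] ∧ v.reverse = v := by
  induction L with
  | nil => simp at h
  | cons w L ih =>
    by_cases hw : 3 ≤ w.length
    · obtain ⟨a, u, hw', hu1, hu2⟩ := pal_split w (hall w (by simp)).2 hw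
      refine ⟨[a] :: u :: [a] :: L, by simp, by simp [hw'], ?_⟩
      intro v hv
      simp only [List.mem_cons] at hv
      rcases hv with rfl | rfl | rfl | hv
      · exact ⟨by simp, by simp⟩
      · exact ⟨hu1, hu2⟩
      · exact ⟨by simp, by simp⟩
      · exact hall v (by simp [hv])
    · obtain ⟨w', hw', hw3⟩ := h
      have hmem : w' ∈ L := by
        rcases List.mem_cons.mp hw' with rfl | hm
        · exact absurd hw3 hw
        · exact hm
      obtain ⟨L', h1, h2, h3⟩ := ih (fun v hv => hall v (by simp [hv])) ⟨w', hmem, hw3⟩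
      refine ⟨w :: L', by simp [h1], by simp [h2], ?_⟩
      intro v hv
      rcases List.mem_cons.mp hv with rfl | hm
      · exact hall v (by simp)
      · exact h3 v hm

lemma lemB1 {α : Type*} (L : List (List α)) (hall : ∀ v ∈ L, v ≠ [] ∧ v.reverse = v)
    (hle : ∀ v ∈ L, v.length ≤ 2) (h : L.length + 1 ≤ L.flatten.length) :
    ∃ L' : List (List α), L'.length = L.length + 1 ∧ L'.flatten = L.flatten ∧
      ∀ v ∈ L', v ≠ [] ∧ v.reverse = v := by
  induction L with
  | nil => simp at h
  | cons w L ih =>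
    by_cases hw : w.length = 2
    · obtain ⟨a, rfl⟩ := pal_two w (hall w (by simp)).2 hw
      refine ⟨[a] :: [a] :: L, by simp, by simp, ?_⟩
      intro v hv
      simp only [List.mem_cons] at hv
      rcases hv with rfl | rfl | hv
      · exact ⟨by simp, by simp⟩
      · exact ⟨by simp, by simp⟩
      · exact hall v (by simp [hv])
    · have hw1 : 1 ≤ w.length := List.length_pos_iff.mpr (hall w (by simp)).1
      have hw2 : w.length ≤ 2 := hle w (by simp)
      have hw1' : w.length = 1 := by omega
      have hlen : L.length + 1 ≤ L.flatten.length := by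
        simp only [List.length_flatten, List.map_cons, List.sum_cons, List.length_cons,
          List.length_nil] at h ⊢
        omega
      obtain ⟨L', h1, h2, h3⟩ := ih (fun v hv => hall v (by simp [hv]))
        (fun v hv => hle v (by simp [hv])) hlen
      refine ⟨w :: L', by simp [h1], by simp [h2], ?_⟩
      intro v hv
      rcases List.mem_cons.mp hv with rfl | hm
      · exact hall v (by simp)
      · exact h3 v hm

lemma lemB {α : Type*} (L : List (List α)) (hall : ∀ v ∈ L, v ≠ [] ∧ v.reverse = v)
    (hle : ∀ v ∈ L, v.length ≤ 2) (h : L.length + 2 ≤ L.flatten.length) :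
    ∃ L' : List (List α), L'.length = L.length + 2 ∧ L'.flatten = L.flatten ∧
      ∀ v ∈ L', v ≠ [] ∧ v.reverse = v := by
  induction L with
  | nil => simp at h
  | cons w L ih =>
    by_cases hw : w.length = 2
    · obtain ⟨a, rfl⟩ := pal_two w (hall w (by simp)).2 hw
      have hlen : L.length + 1 ≤ L.flatten.length := by
        simp only [List.length_flatten, List.map_cons, List.sum_cons, List.length_cons,
          List.length_nil] at h ⊢
        omega
      obtain ⟨L', h1, h2, h3⟩ := lemB1 L (fun v hv => hall v (by simp [hv]))
        (fun v hv => hle v (by simp [hv])) hlen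
      refine ⟨[a] :: [a] :: L', by simp [h1], by simp [h2], ?_⟩
      intro v hv
      simp only [List.mem_cons] at hv
      rcases hv with rfl | rfl | hv
      · exact ⟨by simp, by simp⟩
      · exact ⟨by simp, by simp⟩
      · exact h3 v hv
    · have hw1 : 1 ≤ w.length := List.length_pos_iff.mpr (hall w (by simp)).1
      have hw2 : w.length ≤ 2 := hle w (by simp)
      have hw1' : w.length = 1 := by omega
      have hlen : L.length + 2 ≤ L.flatten.length := by
        simp only [List.flatten_cons, List.length_append, List.length_cons] at h
        omega
      obtain ⟨L', h1, h2, h3⟩ := ih (fun v hv => hall v (by simp [hv]))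
        (fun v hv => hle v (by simp [hv])) hlen
      refine ⟨w :: L', by simp [h1], by simp [h2], ?_⟩
      intro v hv
      rcases List.mem_cons.mp hv with rfl | hm
      · exact hall v (by simp)
      · exact h3 v hm

/-- a palindromic factorization of `s` into `k` nonempty palindromes with
`k ≤ |s| - 2` yields a palindromic factorization into `k + 2` nonempty palindromes. -/

theorem palFact_add_two {α : Type*} (s : List α) (k : ℕ)
    (hk : k + 2 ≤ s.length) (h : HasPalFact s k) : HasPalFact s (k + 2) := by
  obtain ⟨L, hlen, hflat, hall⟩ := h
  subst hlen
  have hlen2 : L.length + 2 ≤ L.flatten.length := by rw [hflat]; exact hk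
  by_cases hA : ∃ w ∈ L, 3 ≤ w.length
  · obtain ⟨L', h1, h2, h3⟩ := lemA L hall hA
    exact ⟨L', h1, by rw [h2, hflat], h3⟩
  · push_neg at hA
    obtain ⟨L', h1, h2, h3⟩ := lemB L hall (fun v hv => by have := hA v hv; omega) hlen2
    exact ⟨L', h1, by rw [h2, hflat], h3⟩
end

section
/- Fix a string s and group its nonempty suffix-palindromes into maximal consecutive groups (series) with the same minimal period. If r is the length of the shortest palindrome (tail) of one series, then the longest palindrome (head) of the next series has length less than 2r/3. -/
section Aux

variable {α : Type*}

lemma hasPeriod_length (w : List α) : HasPeriod w w.length :=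
  fun _ h => absurd h (by omega)

lemma minPeriod_spec (w : List α) (hw : w ≠ []) :
    0 < minPeriod w ∧ HasPeriod w (minPeriod w) := by
  have hne : ({p : ℕ | 0 < p ∧ HasPeriod w p}).Nonempty :=
    ⟨w.length, List.length_pos_iff.mpr hw, hasPeriod_length w⟩
  exact Nat.sInf_mem hne

lemma minPeriod_le (w : List α) {p : ℕ} (hp : 0 < p) (h : HasPeriod w p) :
    minPeriod w ≤ p :=
  Nat.sInf_le ⟨hp, h⟩

lemma prefix_getElem? {v u : List α} (h : v <+: u) {i : ℕ} (hi : i < v.length) :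
    u[i]? = v[i]? := by
  obtain ⟨t, rfl⟩ := h
  rw [List.getElem?_append, if_pos hi]

lemma suffix_getElem? {v u : List α} (h : v <:+ u) {i : ℕ} :
    u[(u.length - v.length) + i]? = v[i]? := by
  obtain ⟨t, rfl⟩ := h
  have : (t ++ v).length - v.length = t.length := by simp
  rw [this, List.getElem?_append]
  split
  · omega
  · congr 1; omega

/-- a border of length `m` gives period `|u| - m`. -/
lemma hasPeriod_of_border {v u : List α} (hpre : v <+: u) (hsuf : v <:+ u) :
    HasPeriod u (u.length - v.length) := by
  intro i hi
  have him : i < v.length := by omega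
  rw [prefix_getElem? hpre him]
  have := suffix_getElem? hsuf (i := i)
  rw [← this]; congr 1; omega

/-- transfer a period down to a prefix. -/
lemma hasPeriod_prefix {v u : List α} (h : v <+: u) {p : ℕ} (hP : HasPeriod u p) :
    HasPeriod v p := by
  intro i hi
  have h1 : i < v.length := by omega
  have hvu : v.length ≤ u.length := h.length_le
  rw [← prefix_getElem? h h1, ← prefix_getElem? h hi]
  exact hP i (by omega)

/-- a period `p < |u|` of a palindrome `u` yields a (nonempty, palindromic, proper)
palindromic suffix `u.drop p`. -/
lemma pal_suffix_of_period {u : List α} (hup : u.reverse = u) {p : ℕ}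
    (hpn : p < u.length) (hP : HasPeriod u p) :
    (u.drop p) <:+ u ∧ (u.drop p) ≠ [] ∧ (u.drop p).reverse = u.drop p ∧
      (u.drop p).length = u.length - p := by
  have hlen : (u.drop p).length = u.length - p := by simp
  have hsuf : u.drop p <:+ u := List.drop_suffix p u
  have hne : u.drop p ≠ [] := by
    intro h; rw [← List.length_eq_zero_iff] at h; omega
  have hpre : u.drop p <+: u := by
    have heq : u.drop p = u.take (u.length - p) := by
      apply List.ext_getElem?
      intro n
      rw [List.getElem?_drop, List.getElem?_take]
      split
      · have := hP n (by omega)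
        rw [this]; congr 1; omega
      · exact List.getElem?_eq_none (by omega)
    rw [heq]; exact List.take_prefix _ u
  refine ⟨hsuf, hne, ?_, hlen⟩
  have hrpre : (u.drop p).reverse <+: u := by
    have := List.reverse_prefix.mpr hsuf
    rwa [hup] at this
  have e1 := List.prefix_iff_eq_take.mp hrpre
  have e2 := List.prefix_iff_eq_take.mp hpre
  nth_rewrite 1 [e1]
  rw [List.length_reverse]
  exact e2.symm

end Aux

/-- if `u` is a nonempty suffix-palindrome of `s` (the tail of its series),
and `v` is the longest suffix-palindrome of `s` strictly shorter than `u` (the head of the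
next series, so its minimal period differs from that of `u`), then `|v| < 2|u|/3`. -/

theorem next_series_head_short {α : Type*} (s u v : List α)
    (hu : u <:+ s) (hup : u.reverse = u) (hune : u ≠ [])
    (hv : v <:+ s) (hvp : v.reverse = v) (hvne : v ≠ [])
    (hlt : v.length < u.length)
    (hmax : ∀ w : List α, w <:+ s → w.reverse = w → w ≠ [] → w.length < u.length →
      w.length ≤ v.length)
    (hdiff : minPeriod v ≠ minPeriod u) :
    3 * v.length < 2 * u.length := by
  by_contra hcon
  push_neg at hcon
  set n := u.length with hn
  set m := v.length with hm
  have hm1 : 1 ≤ m := List.length_pos_iff.mpr hvne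
  -- v is a suffix of u
  have hvu : v <:+ u := by
    rcases List.suffix_or_suffix_of_suffix hv hu with h | h
    · exact h
    · exact absurd h.length_le (by omega)
  -- v is a prefix of u (borders of palindromes)
  have hvpre : v <+: u := by
    have : v.reverse <:+ u.reverse := by rw [hvp, hup]; exact hvu
    exact List.reverse_suffix.mp this
  set q := n - m with hq
  have hq1 : 1 ≤ q := by omega
  have hm2q : 2 * q ≤ m := by omega
  -- u has period q
  have hPq : HasPeriod u q := hasPeriod_of_border hvpre hvu
  -- minimal period of u is exactly q
  have hmu : minPeriod u = q := by
    rcases minPeriod_spec u hune with ⟨hp0, hPp⟩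
    have hle : minPeriod u ≤ q := minPeriod_le u (by omega) hPq
    rcases Nat.lt_or_ge (minPeriod u) q with hltq | hge
    · exfalso
      obtain ⟨wsuf, wne, wpal, wlen⟩ :=
        pal_suffix_of_period hup (p := minPeriod u) (by omega) hPp
      have := hmax _ (wsuf.trans hu) wpal wne (by omega)
      omega
    · omega
  -- v has period q, so minPeriod v < q
  have hPvq : HasPeriod v q := hasPeriod_prefix hvpre hPq
  rcases minPeriod_spec v hvne with ⟨hr0, hPvr⟩
  set r := minPeriod v with hrdef
  have hrq : r < q := by
    have : r ≤ q := minPeriod_le v (by omega) hPvq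
    rw [hmu] at hdiff
    omega
  -- period r of v, read inside u via the prefix occurrence
  have P1 : ∀ j : ℕ, j + r < m → u[j]? = u[j + r]? := by
    intro j hj
    rw [prefix_getElem? hvpre (by omega : j < m),
        prefix_getElem? hvpre (by omega : j + r < m)]
    exact hPvr j hj
  -- period r of v, read inside u via the suffix occurrence
  have P2 : ∀ j : ℕ, q ≤ j → j + r < n → u[j]? = u[j + r]? := by
    intro j hjq hj
    have e1 := suffix_getElem? hvu (i := j - q)
    have e2 := suffix_getElem? hvu (i := j - q + r)
    have hnm : n - m = q := rfl
    rw [hnm] at e1 e2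
    have e1' : u[j]? = v[j - q]? := by rw [← e1]; congr 1; omega
    have e2' : u[j + r]? = v[j - q + r]? := by rw [← e2]; congr 1; omega
    rw [e1', e2']
    exact hPvr (j - q) (by omega)
  -- u has period q - r
  have hPd : HasPeriod u (q - r) := by
    intro i hi
    rcases Nat.lt_or_ge i r with hir | hir
    · -- i < r : go up by q from i, and up by r from i + (q-r), both land at i + q
      have e1 : u[i]? = u[i + q]? := hPq i (by omega)
      have e2 : u[i + (q - r)]? = u[i + (q - r) + r]? := P1 (i + (q - r)) (by omega)
      rw [e1, e2]; congr 1; omega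
    · rcases Nat.lt_or_ge i m with him | him
      · -- r ≤ i < m
        have e1 : u[i]? = u[i + q]? := hPq i (by omega)
        have e2 : u[i + (q - r)]? = u[i + (q - r) + r]? := P2 (i + (q - r)) (by omega) (by omega)
        rw [e1, e2]; congr 1; omega
      · -- m ≤ i
        have e1 : u[i - r]? = u[i - r + r]? := P2 (i - r) (by omega) (by omega)
        have e2 : u[i - r]? = u[i - r + q]? := hPq (i - r) (by omega)
        have e1' : u[i]? = u[i - r]? := by rw [e1]; congr 1; omega
        have e2' : u[i - r]? = u[i + (q - r)]? := by rw [e2]; congr 1; omega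
        rw [e1', e2']
  -- this gives a palindromic suffix of length m + r, contradicting maximality of v
  obtain ⟨wsuf, wne, wpal, wlen⟩ := pal_suffix_of_period hup (p := q - r) (by omega) hPd
  have := hmax _ (wsuf.trans hu) wpal wne (by rw [wlen]; omega)
  omega
end

section
/- If s has minimal period p among suffix-palindromes forming a p-series with p = 1, then the series has the form {v^k, v^{k-1}, ..., v} for a single letter v, and this is the last series of s (the shortest nonempty suffix-palindrome of s is in it). -/
lemma hasPeriod_one_replicate {α : Type*} (m : ℕ) (a : α) :
    HasPeriod (List.replicate m a) 1 := by
  intro i hi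
  simp only [List.length_replicate] at hi
  simp [List.getElem?_replicate, Nat.lt_of_succ_lt hi, hi]

lemma minPeriod_replicate {α : Type*} (m : ℕ) (a : α) :
    minPeriod (List.replicate m a) = 1 := by
  have h1 : 1 ∈ {p : ℕ | 0 < p ∧ HasPeriod (List.replicate m a) p} :=
    ⟨one_pos, hasPeriod_one_replicate m a⟩
  have hle := Nat.sInf_le h1
  have hmem := Nat.sInf_mem ⟨1, h1⟩
  exact le_antisymm hle hmem.1

lemma eq_replicate_of_minPeriod_one {α : Type*} {w : List α} (hne : w ≠ [])
    (h : minPeriod w = 1) : w = List.replicate w.length (w.getLast hne) := by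
  have hS : {p : ℕ | 0 < p ∧ HasPeriod w p}.Nonempty := by
    by_contra hc
    rw [Set.not_nonempty_iff_eq_empty] at hc
    rw [minPeriod, hc, Nat.sInf_empty] at h
    exact one_ne_zero h.symm
  have h1 : HasPeriod w 1 := by
    have := Nat.sInf_mem hS
    rw [show sInf {p : ℕ | 0 < p ∧ HasPeriod w p} = minPeriod w from rfl, h] at this
    exact this.2
  have hlen : 0 < w.length := List.length_pos_iff.mpr hne
  -- all entries equal w[0]
  have hall : ∀ i, i < w.length → w[i]? = w[0]? := by
    intro i
    induction i with
    | zero => intro _; rfl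
    | succ n ih =>
      intro hi
      have := h1 n hi
      rw [← this]
      exact ih (Nat.lt_of_succ_lt hi)
  have hgl : w.getLast hne = w[0]'hlen := by
    have := hall (w.length - 1) (Nat.sub_lt hlen one_pos)
    rw [List.getElem?_eq_getElem (Nat.sub_lt hlen one_pos), List.getElem?_eq_getElem hlen] at this
    rw [List.getLast_eq_getElem]
    exact Option.some_injective _ this
  rw [List.eq_replicate_iff]
  refine ⟨rfl, fun b hb => ?_⟩
  obtain ⟨i, hi, hbi⟩ := List.mem_iff_getElem.mp hb
  have := hall i hi
  rw [List.getElem?_eq_getElem hi, List.getElem?_eq_getElem hlen] at this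
  rw [hgl, ← hbi]
  exact Option.some_injective _ this

lemma getLast_of_suffix {α : Type*} {w s : List α} (h : w <:+ s) (hne : w ≠ [])
    (hs : s ≠ []) : w.getLast hne = s.getLast hs := by
  obtain ⟨t, rfl⟩ := h
  rw [List.getLast_append]
  simp [hne]

/-- if the `1`-series of `s` is nonempty, then it equals
`{v^k, v^{k-1}, ..., v}` for a single letter `v`, and it is the last series of `s`:
the shortest nonempty suffix-palindrome of `s` belongs to it. -/
theorem one_series_structure {α : Type*} (s : List α) (hU : (pSeries s 1).Nonempty) :
    ∃ (a : α) (k : ℕ), 1 ≤ k ∧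
      pSeries s 1 = {w | ∃ m : ℕ, 1 ≤ m ∧ m ≤ k ∧ w = List.replicate m a} ∧
      ∃ y ∈ pSeries s 1, ∀ z : List α, z <:+ s → z ≠ [] → z.reverse = z →
        y.length ≤ z.length := by
  obtain ⟨w0, hw0s, hw0ne, hw0pal, hw0p⟩ := hU
  have hs : s ≠ [] := by
    rintro rfl
    exact hw0ne (List.suffix_nil.mp hw0s)
  set a := s.getLast hs with ha
  have hrep : ∀ w ∈ pSeries s 1, w = List.replicate w.length a := by
    rintro w ⟨hws, hwne, _, hwp⟩
    have := eq_replicate_of_minPeriod_one hwne hwp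
    rwa [getLast_of_suffix hws hwne hs] at this
  set T : Set ℕ := {m | 0 < m ∧ List.replicate m a <:+ s} with hT
  have hTne : T.Nonempty := by
    refine ⟨w0.length, List.length_pos_iff.mpr hw0ne, ?_⟩
    have := hrep w0 ⟨hw0s, hw0ne, hw0pal, hw0p⟩
    rwa [← this]
  have hTbdd : BddAbove T := by
    refine ⟨s.length, fun m hm => ?_⟩
    have := hm.2.length_le
    simpa using this
  set k := sSup T with hk
  have hkT : k ∈ T := Nat.sSup_mem hTne hTbdd
  have hrepk : ∀ m, 1 ≤ m → m ≤ k → List.replicate m a ∈ pSeries s 1 := by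
    intro m h1 hmk
    refine ⟨?_, ?_, List.reverse_replicate, minPeriod_replicate m a⟩
    · refine List.IsSuffix.trans ⟨List.replicate (k - m) a, ?_⟩ hkT.2
      rw [← List.replicate_add]
      congr 1
      omega
    · simp only [ne_eq, List.replicate_eq_nil_iff]; omega
  refine ⟨a, k, hkT.1, ?_, ?_⟩
  · ext w
    constructor
    · intro hw
      refine ⟨w.length, List.length_pos_iff.mpr hw.2.1, ?_, hrep w hw⟩
      refine le_csSup hTbdd ⟨List.length_pos_iff.mpr hw.2.1, ?_⟩
      rw [← hrep w hw]; exact hw.1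
    · rintro ⟨m, h1, hmk, rfl⟩
      exact hrepk m h1 hmk
  · refine ⟨List.replicate 1 a, hrepk 1 le_rfl hkT.1, ?_⟩
    intro z _ hzne _
    exact List.length_pos_iff.mpr hzne
end

section
/- For any string w, letters a and b, and j ∈ {0,1} with pl^j(w·a·b) finite, the value pl^j(w·a·b) belongs to the set { pl^{1-j}(w·a) + 1, pl^{1-j}(w·a) - 1, pl^{1-j}(w) + 1 } (with the arithmetic conventions that ∞ ± 1 = ∞). -/
section Aux

open List

lemma hasPalFact_append_pal {α : Type*} {s : List α} {k : ℕ} (h : HasPalFact s k)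
    {p : List α} (hp : p ≠ []) (hpal : p.reverse = p) :
    HasPalFact (s ++ p) (k + 1) := by
  obtain ⟨L, hlen, hfl, hall⟩ := h
  refine ⟨L ++ [p], by simp [hlen], by simp [hfl], ?_⟩
  intro x hx
  rcases List.mem_append.1 hx with h | h
  · exact hall x h
  · simp only [List.mem_singleton] at h; subst h; exact ⟨hp, hpal⟩

lemma hasPalFact_concat {α : Type*} {s : List α} {k : ℕ} (hk : k ≠ 0) (h : HasPalFact s k) :
    ∃ t P, t ++ P = s ∧ P ≠ [] ∧ P.reverse = P ∧ HasPalFact t (k - 1) := by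
  obtain ⟨L, hlen, hfl, hall⟩ := h
  rcases List.eq_nil_or_concat L with rfl | ⟨L', P, rfl⟩
  · simp at hlen; omega
  · have hlen' : L'.length = k - 1 := by simp at hlen; omega
    refine ⟨L'.flatten, P, by simpa using hfl, (hall P (by simp)).1, (hall P (by simp)).2,
      L', hlen', rfl, fun x hx => hall x (by simp [hx])⟩

lemma plParity_eq_image {α : Type*} (j : ℕ) (s : List α) :
    plParity j s = sInf ((fun k : ℕ => (k : ℕ∞)) '' {k : ℕ | k % 2 = j ∧ HasPalFact s k}) := by
  unfold plParity
  congr 1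
  ext n
  constructor
  · rintro ⟨k, rfl, h1, h2⟩; exact ⟨k, ⟨h1, h2⟩, rfl⟩
  · rintro ⟨k, ⟨h1, h2⟩, rfl⟩; exact ⟨k, rfl, h1, h2⟩

lemma coe_sInf_image' {S : Set ℕ} (hS : S.Nonempty) :
    sInf ((fun k : ℕ => (k : ℕ∞)) '' S) = ((sInf S : ℕ) : ℕ∞) := by
  apply _root_.le_antisymm
  · exact sInf_le ⟨sInf S, Nat.sInf_mem hS, rfl⟩
  · apply le_sInf
    rintro _ ⟨k, hk, rfl⟩
    show ((sInf S : ℕ) : ℕ∞) ≤ ((k : ℕ) : ℕ∞)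
    exact_mod_cast Nat.sInf_le hk

end Aux

/-- three-case lemma for even/odd palindromic length: if `pl^j(w·a·b)` is
finite, then it equals `pl^{1-j}(w·a) + 1`, `pl^{1-j}(w·a) - 1`, or `pl^{1-j}(w) + 1`. -/
theorem plParity_append_two {α : Type*} (w : List α) (a b : α) (j : ℕ)
    (hj : j = 0 ∨ j = 1) (hfin : plParity j (w ++ [a, b]) ≠ ⊤) :
    plParity j (w ++ [a, b]) = plParity (1 - j) (w ++ [a]) + 1 ∨
    plParity j (w ++ [a, b]) = plParity (1 - j) (w ++ [a]) - 1 ∨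
    plParity j (w ++ [a, b]) = plParity (1 - j) w + 1 := by
  have hj1 : j ≤ 1 := by rcases hj with rfl | rfl <;> omega
  classical
  set S : Set ℕ := {k | k % 2 = j ∧ HasPalFact (w ++ [a, b]) k} with hS
  have hSne : S.Nonempty := by
    by_contra h
    rw [Set.not_nonempty_iff_eq_empty] at h
    apply hfin
    rw [plParity_eq_image, ← hS, h]
    simp
  set n := sInf S with hn
  have hmem : n ∈ S := Nat.sInf_mem hSne
  have heq : plParity j (w ++ [a, b]) = (n : ℕ∞) := by
    rw [plParity_eq_image, ← hS, coe_sInf_image' hSne]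
  have hminS : ∀ k, k % 2 = j → HasPalFact (w ++ [a, b]) k → n ≤ k := by
    intro k h1 h2; exact Nat.sInf_le ⟨h1, h2⟩
  have hnpos : n ≠ 0 := by
    intro h0
    obtain ⟨h1, L, hlen, hfl, _⟩ := hmem
    rw [h0, List.length_eq_zero_iff] at hlen
    subst hlen
    simp at hfl
  -- extract the last palindrome factor
  obtain ⟨t, P, htP, hPne, hPpal, hfact⟩ := hasPalFact_concat hnpos hmem.2
  obtain ⟨Q, c, rfl⟩ := (List.eq_nil_or_concat P).resolve_left hPne
  rw [List.concat_eq_append] at htP hPne hPpal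
  have hsplit : (t ++ Q) ++ [c] = (w ++ [a]) ++ [b] := by
    rw [List.append_assoc, htP]; simp
  obtain ⟨hTQ, hc⟩ := List.append_inj' hsplit rfl
  have hcb : b = c := by simpa using hc.symm
  subst hcb
  rcases Q with _ | ⟨c₀, u⟩
  · -- Case 1 : P = [b]
    simp only [List.append_nil] at hTQ
    subst hTQ
    left
    have hfac1 : HasPalFact (w ++ [a]) (n - 1) := hfact
    have hpar1 : (n - 1) % 2 = 1 - j := by have := hmem.1; omega
    have hub : plParity (1 - j) (w ++ [a]) ≤ ((n - 1 : ℕ) : ℕ∞) :=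
      sInf_le ⟨n - 1, rfl, hpar1, hfac1⟩
    have hlb : ((n - 1 : ℕ) : ℕ∞) ≤ plParity (1 - j) (w ++ [a]) := by
      apply le_sInf
      rintro _ ⟨k, rfl, hk1, hk2⟩
      have hk3 : HasPalFact (w ++ [a] ++ [b]) (k + 1) :=
        hasPalFact_append_pal hk2 (by simp) (by simp)
      rw [List.append_assoc] at hk3
      have hle := hminS (k + 1) (by omega) (by simpa using hk3)
      exact_mod_cast by omega
    have heq1 : plParity (1 - j) (w ++ [a]) = ((n - 1 : ℕ) : ℕ∞) :=
      _root_.le_antisymm hub hlb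
    rw [heq, heq1]
    exact_mod_cast (by omega : n = (n - 1) + 1)
  · -- P = c₀ :: u ++ [b], palindrome forces c₀ = b and u palindrome
    have hrev : (c₀ :: (u ++ [b])).reverse = c₀ :: (u ++ [b]) := by
      simpa using hPpal
    rw [List.reverse_cons, List.reverse_append] at hrev
    simp only [List.reverse_cons, List.reverse_nil, List.nil_append] at hrev
    have hc₀ : b = c₀ := by
      have h' := congrArg (fun l => l.head?) hrev
      simpa using h'
    subst hc₀
    have hu : u.reverse = u := by
      have h2 : (u.reverse ++ [b]) = u ++ [b] := by
        have h3 := congrArg List.tail hrev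
        simpa using h3
      exact List.append_left_injective _ h2
    rcases u with _ | ⟨d, v⟩
    · -- Case 2 : P = [b, b], so a = b, t = w
      obtain ⟨htw, hab⟩ := List.append_inj' hTQ rfl
      have hab' : a = b := by
        have := hab.symm; simpa using this
      right; right
      have hfac0 : HasPalFact w (n - 1) := htw ▸ hfact
      have hpar0 : (n - 1) % 2 = 1 - j := by have := hmem.1; omega
      have hub : plParity (1 - j) w ≤ ((n - 1 : ℕ) : ℕ∞) :=
        sInf_le ⟨n - 1, rfl, hpar0, hfac0⟩
      have hlb : ((n - 1 : ℕ) : ℕ∞) ≤ plParity (1 - j) w := by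
        apply le_sInf
        rintro _ ⟨k, rfl, hk1, hk2⟩
        have hk3 : HasPalFact (w ++ [a, b]) (k + 1) := by
          rw [hab']
          exact hasPalFact_append_pal hk2 (by simp) (by simp)
        have hle := hminS (k + 1) (by omega) hk3
        exact_mod_cast by omega
      have heq1 : plParity (1 - j) w = ((n - 1 : ℕ) : ℕ∞) :=
        _root_.le_antisymm hub hlb
      rw [heq, heq1]
      exact_mod_cast (by omega : n = (n - 1) + 1)
    · -- Case 3 : P = b :: (d :: v) ++ [b], inner part nonempty
      have hT : (t ++ [b]) ++ (d :: v) = w ++ [a] := by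
        rw [List.append_assoc]; exact hTQ
      have hfac2 : HasPalFact (w ++ [a]) (n + 1) := by
        have h1 : HasPalFact (t ++ [b]) (n - 1 + 1) :=
          hasPalFact_append_pal hfact (by simp) (by simp)
        have h2 : HasPalFact ((t ++ [b]) ++ (d :: v)) (n - 1 + 1 + 1) :=
          hasPalFact_append_pal h1 (by simp) hu
        rw [hT] at h2
        have h4 : n - 1 + 1 + 1 = n + 1 := by omega
        rwa [h4] at h2
      have hpar2 : (n + 1) % 2 = 1 - j := by have := hmem.1; omega
      set T : Set ℕ := {k | k % 2 = 1 - j ∧ HasPalFact (w ++ [a]) k} with hT'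
      have hTne : T.Nonempty := ⟨n + 1, hpar2, hfac2⟩
      set m := sInf T with hm
      have hmmem : m ∈ T := Nat.sInf_mem hTne
      have heqT : plParity (1 - j) (w ++ [a]) = (m : ℕ∞) := by
        rw [plParity_eq_image, ← hT', coe_sInf_image' hTne]
      have hmle : m ≤ n + 1 := Nat.sInf_le ⟨hpar2, hfac2⟩
      rcases eq_or_lt_of_le hmle with hcase | hcase
      · -- m = n + 1 : second disjunct
        right; left
        rw [heq, heqT, hcase]
        exact_mod_cast (by omega : n = n + 1 - 1)
      · -- first disjunct
        have hk3 : HasPalFact (w ++ [a] ++ [b]) (m + 1) :=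
          hasPalFact_append_pal hmmem.2 (by simp) (by simp)
        rw [List.append_assoc] at hk3
        have hle := hminS (m + 1) (by have := hmmem.1; omega) (by simpa using hk3)
        have hmeq : m = n - 1 := by have := hmem.1; have := hmmem.1; omega
        left
        rw [heq, heqT, hmeq]
        exact_mod_cast (by omega : n = (n - 1) + 1)
end

section
/- If f_1(i) = pl^{(i-1) mod 2}(s[0..i]) and f_2(i) = pl^{i mod 2}(s[0..i]) and f_j has a 'drop' at position i, meaning f_j(i) = f_{3-j}(i-2) + 1 ≤ f_j(i-1) - 3, then neither f_1 nor f_2 has a drop at position i+1. -/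
/-- `f₁(i) = pl^{(i-1) mod 2}(s[0..i])`. -/
noncomputable def palF1 {α : Type*} (s : List α) (i : ℕ) : ℕ∞ :=
  plParity ((i + 1) % 2) (s.take (i + 1))

/-- `f₂(i) = pl^{i mod 2}(s[0..i])`. -/
noncomputable def palF2 {α : Type*} (s : List α) (i : ℕ) : ℕ∞ :=
  plParity (i % 2) (s.take (i + 1))

section Aux

variable {α : Type*}

lemma hasPalFact_len (w : List α) : HasPalFact w w.length := by
  refine ⟨w.map (fun a => [a]), by simp, ?_, ?_⟩
  · induction w with
    | nil => simp
    | cons x xs ih => simpa using ih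
  · intro u hu
    simp only [List.mem_map] at hu
    obtain ⟨a, -, rfl⟩ := hu
    exact ⟨by simp, by simp⟩

lemma plParity_le_of_fact {j k : ℕ} {u : List α} (h : HasPalFact u k) (hk : k % 2 = j) :
    plParity j u ≤ (k : ℕ∞) := sInf_le ⟨k, rfl, hk, h⟩

lemma plParity_ne_top (w : List α) {j : ℕ} (hj : j = w.length % 2) : plParity j w ≠ ⊤ := by
  have h := plParity_le_of_fact (hasPalFact_len w) hj.symm
  intro ht
  rw [ht, top_le_iff] at h
  exact ENat.coe_ne_top _ h

lemma plParity_spec {j : ℕ} {u : List α} (h : plParity j u ≠ ⊤) :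
    ∃ k : ℕ, plParity j u = (k : ℕ∞) ∧ k % 2 = j ∧ HasPalFact u k := by
  have hne : {n : ℕ∞ | ∃ k : ℕ, n = (k : ℕ∞) ∧ k % 2 = j ∧ HasPalFact u k}.Nonempty := by
    by_contra hne
    rw [Set.not_nonempty_iff_eq_empty] at hne
    exact h (by simp [plParity, hne])
  exact csInf_mem hne

lemma plParity_upper (p q : ℕ) (hpq : (q + 1) % 2 = p) (w : List α) (b : α) :
    plParity p (w ++ [b]) ≤ plParity q w + 1 := by
  rcases eq_or_ne (plParity q w) ⊤ with h | h
  · simp [h]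
  obtain ⟨k, hk, hkq, L, hLlen, hLflat, hLpal⟩ := plParity_spec h
  have hfact : HasPalFact (w ++ [b]) (k + 1) := by
    refine ⟨L ++ [[b]], by simp [hLlen], by simp [hLflat], ?_⟩
    intro u hu
    rcases List.mem_append.mp hu with h' | h'
    · exact hLpal u h'
    · simp only [List.mem_singleton] at h'
      subst h'
      exact ⟨by simp, by simp⟩
  have hle := plParity_le_of_fact (j := p) hfact (by omega)
  rw [hk]
  exact_mod_cast hle

lemma plParity_lower (p q : ℕ) (hpq : (p + 1) % 2 = q) (w : List α) (a b : α) :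
    plParity q (w ++ [a]) ≤ plParity p (w ++ [a, b]) + 1 ∨
    plParity q w + 1 ≤ plParity p (w ++ [a, b]) := by
  rcases eq_or_ne (plParity p (w ++ [a, b])) ⊤ with h | h
  · right; simp [h]
  obtain ⟨k, hk, hkp, L, hLlen, hLflat, hLpal⟩ := plParity_spec h
  have hLne : L ≠ [] := by
    rintro rfl
    simp at hLflat
  obtain ⟨L', P, rfl⟩ := (List.eq_nil_or_concat L).resolve_left hLne
  obtain ⟨hPne, hPpal⟩ := hLpal P (by simp)
  have hflat : L'.flatten ++ P = w ++ [a, b] := by simpa using hLflat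
  have hk1 : L'.length + 1 = k := by simpa using hLlen
  have hP : P = P.dropLast ++ [P.getLast hPne] := (List.dropLast_append_getLast hPne).symm
  have hsplit : (L'.flatten ++ P.dropLast) ++ [P.getLast hPne] = (w ++ [a]) ++ [b] := by
    rw [List.append_assoc, ← hP, hflat]
    simp
  obtain ⟨hD, hb⟩ := List.append_inj' hsplit (by simp)
  have hpal' : ∀ u ∈ L', u ≠ [] ∧ u.reverse = u := fun u hu => hLpal u (by simp [hu])
  rcases hDc : P.dropLast with _ | ⟨x, M⟩
  · rw [hDc] at hD
    simp only [List.append_nil] at hD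
    left
    have hfact : HasPalFact (w ++ [a]) L'.length := ⟨L', rfl, hD, hpal'⟩
    have hle := plParity_le_of_fact hfact (show L'.length % 2 = q by omega)
    rw [hk]
    calc plParity q (w ++ [a]) ≤ (L'.length : ℕ∞) := hle
      _ ≤ (k : ℕ∞) + 1 := by exact_mod_cast Nat.le_succ_of_le (by omega)
  · rcases M with _ | ⟨y, M'⟩
    · have hPeq : P = [x, b] := by
        rw [hP, hDc]
        simp [hb]
      rw [hDc] at hD
      obtain ⟨hD', hxa⟩ := List.append_inj' hD (by simp)
      right
      have hfact : HasPalFact w L'.length := ⟨L', rfl, hD', hpal'⟩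
      have hle := plParity_le_of_fact hfact (show L'.length % 2 = q by omega)
      rw [hk]
      calc plParity q w + 1 ≤ (L'.length : ℕ∞) + 1 := add_le_add hle le_rfl
        _ ≤ (k : ℕ∞) := by exact_mod_cast Nat.le_of_eq hk1
    · have hPeq : P = x :: ((y :: M') ++ [b]) := by
        rw [hP, hDc]; simp [hb]
      rw [hPeq] at hPpal
      have hPpal2 : b :: ((y :: M').reverse ++ [x]) = x :: (y :: M' ++ [b]) := by
        rw [← hPpal]; simp
      have hxb : b = x := by
        have := congrArg (fun l => l.head?) hPpal2
        simpa using this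
      subst hxb
      have hMrev : (y :: M').reverse = y :: M' := by
        have htail : (y :: M').reverse ++ [b] = (y :: M') ++ [b] := by
          have := congrArg (fun l => l.tail) hPpal2
          simpa using this
        exact (List.append_inj' htail (by simp)).1
      rw [hDc] at hD
      left
      have hfact : HasPalFact (w ++ [a]) (L'.length + 2) := by
        refine ⟨L' ++ [[b], y :: M'], by simp, by simpa using hD, ?_⟩
        intro u hu
        rcases List.mem_append.mp hu with h' | h'
        · exact hpal' u h'
        · simp only [List.mem_cons, List.not_mem_nil, or_false] at h'
          rcases h' with rfl | rfl
          · exact ⟨by simp, by simp⟩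
          · exact ⟨by simp, hMrev⟩
      have hle := plParity_le_of_fact hfact (show (L'.length + 2) % 2 = q by omega)
      rw [hk]
      calc plParity q (w ++ [a]) ≤ ((L'.length + 2 : ℕ) : ℕ∞) := hle
        _ ≤ (k : ℕ∞) + 1 := by exact_mod_cast by omega

lemma take_succ_ex {s : List α} {n : ℕ} (h : n < s.length) :
    ∃ x : α, s.take (n + 1) = s.take n ++ [x] := by
  refine ⟨s[n], ?_⟩
  rw [List.take_succ, List.getElem?_eq_getElem h]
  rfl

lemma palF1_ne_top (s : List α) (m : ℕ) (h : m + 1 ≤ s.length) : palF1 s m ≠ ⊤ :=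
  plParity_ne_top _ (by rw [List.length_take, Nat.min_eq_left h])

lemma palF1_upper (s : List α) (m : ℕ) (h : m + 2 ≤ s.length) :
    palF1 s (m + 1) ≤ palF1 s m + 1 := by
  obtain ⟨x, hx⟩ := take_succ_ex (s := s) (n := m + 1) (by omega)
  show plParity ((m + 1 + 1) % 2) (s.take (m + 1 + 1)) ≤ plParity ((m + 1) % 2) (s.take (m + 1)) + 1
  rw [hx]
  exact plParity_upper _ _ (by omega) _ _

lemma palF2_upper (s : List α) (m : ℕ) (h : m + 2 ≤ s.length) :
    palF2 s (m + 1) ≤ palF2 s m + 1 := by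
  obtain ⟨x, hx⟩ := take_succ_ex (s := s) (n := m + 1) (by omega)
  show plParity ((m + 1) % 2) (s.take (m + 1 + 1)) ≤ plParity (m % 2) (s.take (m + 1)) + 1
  rw [hx]
  exact plParity_upper _ _ (by omega) _ _

lemma fin_of_eq_add_one {x y : ℕ∞} (h : x = y + 1) (hx : x ≠ ⊤) : y ≠ ⊤ := by
  rintro rfl
  rw [top_add] at h
  exact hx h

lemma fin_of_le {x y : ℕ∞} (h : x ≤ y) (hy : y ≠ ⊤) : x ≠ ⊤ := by
  rintro rfl
  exact hy (top_le_iff.mp h)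

lemma fin_add_one {y : ℕ∞} (hy : y ≠ ⊤) : y + 1 ≠ ⊤ :=
  WithTop.add_ne_top.mpr ⟨hy, WithTop.one_ne_top⟩

lemma exists_nat_of_ne_top {x : ℕ∞} (hx : x ≠ ⊤) : ∃ n : ℕ, (n : ℕ∞) = x := by
  lift x to ℕ using hx
  exact ⟨x, rfl⟩

end Aux

/-- if `f_j` has a drop at position `i`
(`f_j(i) = f_{3-j}(i-2) + 1 ≤ f_j(i-1) - 3`), then neither `f₁` nor `f₂` has a drop at
position `i + 1`. -/
theorem no_consecutive_drops {α : Type*} (s : List α) (i : ℕ) (hi : 2 ≤ i)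
    (hlen : i + 2 ≤ s.length)
    (hdrop : (palF1 s i = palF2 s (i - 2) + 1 ∧ palF1 s i + 3 ≤ palF1 s (i - 1)) ∨
             (palF2 s i = palF1 s (i - 2) + 1 ∧ palF2 s i + 3 ≤ palF2 s (i - 1))) :
    ¬(palF1 s (i + 1) = palF2 s (i - 1) + 1 ∧ palF1 s (i + 1) + 3 ≤ palF1 s i) ∧
    ¬(palF2 s (i + 1) = palF1 s (i - 1) + 1 ∧ palF2 s (i + 1) + 3 ≤ palF2 s i) := by
  obtain ⟨t, rfl⟩ : ∃ t, i = t + 2 := ⟨i - 2, by omega⟩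
  -- letters
  obtain ⟨x1, he1⟩ := take_succ_ex (s := s) (n := t) (by omega)
  obtain ⟨x2, he2⟩ := take_succ_ex (s := s) (n := t + 1) (by omega)
  have h2 : s.take (t + 1 + 1) = s.take t ++ [x1, x2] := by
    rw [he2, he1, List.append_assoc]
    rfl
  -- finiteness of the f₁ values
  have hA2fin : palF1 s t ≠ ⊤ := palF1_ne_top s t (by omega)
  have hA1fin : palF1 s (t + 1) ≠ ⊤ := palF1_ne_top s (t + 1) (by omega)
  have hA0fin : palF1 s (t + 2) ≠ ⊤ := palF1_ne_top s (t + 2) (by omega)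
  have hApfin : palF1 s (t + 3) ≠ ⊤ := palF1_ne_top s (t + 3) (by omega)
  have hCfin : plParity (t % 2) (s.take t) ≠ ⊤ :=
    plParity_ne_top _ (by rw [List.length_take, Nat.min_eq_left (by omega)])
  -- upper bounds
  have hUA1 : palF1 s (t + 1) ≤ palF1 s t + 1 := palF1_upper s t (by omega)
  have hUA2 : palF1 s (t + 2) ≤ palF1 s (t + 1) + 1 := palF1_upper s (t + 1) (by omega)
  have hUB1 : palF2 s (t + 1) ≤ palF2 s t + 1 := palF2_upper s t (by omega)
  have hUB2 : palF2 s (t + 2) ≤ palF2 s (t + 1) + 1 := palF2_upper s (t + 1) (by omega)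
  have hU0A : palF1 s t ≤ plParity (t % 2) (s.take t) + 1 := by
    show plParity ((t + 1) % 2) (s.take (t + 1)) ≤ _
    rw [he1]
    exact plParity_upper _ _ (by omega) _ _
  have hU0B : palF2 s t ≤ plParity ((t + 1) % 2) (s.take t) + 1 := by
    show plParity (t % 2) (s.take (t + 1)) ≤ _
    rw [he1]
    exact plParity_upper _ _ (by omega) _ _
  -- lower (three-case) facts at position t+1
  have hLB : palF2 s t ≤ palF2 s (t + 1) + 1 ∨
      plParity (t % 2) (s.take t) + 1 ≤ palF2 s (t + 1) := by
    have h := plParity_lower ((t + 1) % 2) (t % 2) (by omega) (s.take t) x1 x2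
    rw [← he1, ← h2] at h
    exact h
  have hLA : palF1 s t ≤ palF1 s (t + 1) + 1 ∨
      plParity ((t + 1) % 2) (s.take t) + 1 ≤ palF1 s (t + 1) := by
    have h := plParity_lower ((t + 1 + 1) % 2) ((t + 1) % 2) (by omega) (s.take t) x1 x2
    rw [← he1, ← h2] at h
    exact h
  have hdrop' : (palF1 s (t + 2) = palF2 s t + 1 ∧ palF1 s (t + 2) + 3 ≤ palF1 s (t + 1)) ∨
      (palF2 s (t + 2) = palF1 s t + 1 ∧ palF2 s (t + 2) + 3 ≤ palF2 s (t + 1)) := hdrop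
  clear hdrop
  constructor
  · rintro ⟨g1, g2⟩
    have g1' : palF1 s (t + 3) = palF2 s (t + 1) + 1 := g1
    have g2' : palF1 s (t + 3) + 3 ≤ palF1 s (t + 2) := g2
    have hB1fin : palF2 s (t + 1) ≠ ⊤ := fin_of_eq_add_one g1' hApfin
    rcases hdrop' with ⟨d1, d2⟩ | ⟨d1, d2⟩
    · -- f₁ drop at i, f₁ "drop" at i+1 : contradiction
      have hB2fin : palF2 s t ≠ ⊤ := fin_of_eq_add_one d1 hA0fin
      obtain ⟨a0, ha0⟩ := exists_nat_of_ne_top hA0fin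
      obtain ⟨a1, ha1⟩ := exists_nat_of_ne_top hA1fin
      obtain ⟨a2, ha2⟩ := exists_nat_of_ne_top hA2fin
      obtain ⟨ap, hap⟩ := exists_nat_of_ne_top hApfin
      obtain ⟨b1, hb1⟩ := exists_nat_of_ne_top hB1fin
      obtain ⟨b2, hb2⟩ := exists_nat_of_ne_top hB2fin
      obtain ⟨c, hc⟩ := exists_nat_of_ne_top hCfin
      rw [← ha0, ← hb2] at d1
      rw [← ha0, ← ha1] at d2
      rw [← hap, ← hb1] at g1'
      rw [← hap, ← ha0] at g2'
      rw [← ha1, ← ha2] at hUA1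
      rw [← ha2, ← hc] at hU0A
      have d1n : a0 = b2 + 1 := by exact_mod_cast d1
      have d2n : a0 + 3 ≤ a1 := by exact_mod_cast d2
      have g1n : ap = b1 + 1 := by exact_mod_cast g1'
      have g2n : ap + 3 ≤ a0 := by exact_mod_cast g2'
      have hUA1n : a1 ≤ a2 + 1 := by exact_mod_cast hUA1
      have hU0An : a2 ≤ c + 1 := by exact_mod_cast hU0A
      rcases hLB with hL | hR
      · rw [← hb2, ← hb1] at hL
        have hLn : b2 ≤ b1 + 1 := by exact_mod_cast hL
        omega
      · rw [← hc, ← hb1] at hR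
        have hRn : c + 1 ≤ b1 := by exact_mod_cast hR
        omega
    · -- f₂ drop at i, f₁ "drop" at i+1
      have hB0fin : palF2 s (t + 2) ≠ ⊤ := by
        rw [d1]; exact fin_add_one hA2fin
      have hB1fin' : palF2 s (t + 1) ≠ ⊤ := hB1fin
      obtain ⟨a0, ha0⟩ := exists_nat_of_ne_top hA0fin
      obtain ⟨a1, ha1⟩ := exists_nat_of_ne_top hA1fin
      obtain ⟨a2, ha2⟩ := exists_nat_of_ne_top hA2fin
      obtain ⟨ap, hap⟩ := exists_nat_of_ne_top hApfin
      obtain ⟨b0, hb0⟩ := exists_nat_of_ne_top hB0fin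
      obtain ⟨b1, hb1⟩ := exists_nat_of_ne_top hB1fin'
      rw [← hb0, ← ha2] at d1
      rw [← hb0, ← hb1] at d2
      rw [← hap, ← hb1] at g1'
      rw [← hap, ← ha0] at g2'
      rw [← ha1, ← ha2] at hUA1
      rw [← ha0, ← ha1] at hUA2
      have d1n : b0 = a2 + 1 := by exact_mod_cast d1
      have d2n : b0 + 3 ≤ b1 := by exact_mod_cast d2
      have g1n : ap = b1 + 1 := by exact_mod_cast g1'
      have g2n : ap + 3 ≤ a0 := by exact_mod_cast g2'
      have hUA1n : a1 ≤ a2 + 1 := by exact_mod_cast hUA1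
      have hUA2n : a0 ≤ a1 + 1 := by exact_mod_cast hUA2
      omega
  · rintro ⟨g1, g2⟩
    have g1' : palF2 s (t + 3) = palF1 s (t + 1) + 1 := g1
    have g2' : palF2 s (t + 3) + 3 ≤ palF2 s (t + 2) := g2
    have hBpfin : palF2 s (t + 3) ≠ ⊤ := by
      rw [g1']; exact fin_add_one hA1fin
    rcases hdrop' with ⟨d1, d2⟩ | ⟨d1, d2⟩
    · -- f₁ drop at i, f₂ "drop" at i+1
      have hB2fin : palF2 s t ≠ ⊤ := fin_of_eq_add_one d1 hA0fin
      have hB1fin : palF2 s (t + 1) ≠ ⊤ := fin_of_le hUB1 (fin_add_one hB2fin)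
      have hB0fin : palF2 s (t + 2) ≠ ⊤ := fin_of_le hUB2 (fin_add_one hB1fin)
      obtain ⟨a0, ha0⟩ := exists_nat_of_ne_top hA0fin
      obtain ⟨a1, ha1⟩ := exists_nat_of_ne_top hA1fin
      obtain ⟨b2, hb2⟩ := exists_nat_of_ne_top hB2fin
      obtain ⟨b1, hb1⟩ := exists_nat_of_ne_top hB1fin
      obtain ⟨b0, hb0⟩ := exists_nat_of_ne_top hB0fin
      obtain ⟨bp, hbp⟩ := exists_nat_of_ne_top hBpfin
      rw [← ha0, ← hb2] at d1
      rw [← ha0, ← ha1] at d2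
      rw [← hbp, ← ha1] at g1'
      rw [← hbp, ← hb0] at g2'
      rw [← hb1, ← hb2] at hUB1
      rw [← hb0, ← hb1] at hUB2
      have d1n : a0 = b2 + 1 := by exact_mod_cast d1
      have d2n : a0 + 3 ≤ a1 := by exact_mod_cast d2
      have g1n : bp = a1 + 1 := by exact_mod_cast g1'
      have g2n : bp + 3 ≤ b0 := by exact_mod_cast g2'
      have hUB1n : b1 ≤ b2 + 1 := by exact_mod_cast hUB1
      have hUB2n : b0 ≤ b1 + 1 := by exact_mod_cast hUB2
      omega
    · -- f₂ drop at i, f₂ "drop" at i+1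
      have hB0fin : palF2 s (t + 2) ≠ ⊤ := by
        rw [d1]; exact fin_add_one hA2fin
      rcases hLA with hL | hR
      · obtain ⟨a1, ha1⟩ := exists_nat_of_ne_top hA1fin
        obtain ⟨a2, ha2⟩ := exists_nat_of_ne_top hA2fin
        obtain ⟨b0, hb0⟩ := exists_nat_of_ne_top hB0fin
        obtain ⟨bp, hbp⟩ := exists_nat_of_ne_top hBpfin
        rw [← hb0, ← ha2] at d1
        rw [← hbp, ← ha1] at g1'
        rw [← hbp, ← hb0] at g2'
        rw [← ha2, ← ha1] at hL
        have d1n : b0 = a2 + 1 := by exact_mod_cast d1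
        have g1n : bp = a1 + 1 := by exact_mod_cast g1'
        have g2n : bp + 3 ≤ b0 := by exact_mod_cast g2'
        have hLn : a2 ≤ a1 + 1 := by exact_mod_cast hL
        omega
      · have hC'fin : plParity ((t + 1) % 2) (s.take t) ≠ ⊤ :=
          fin_of_le (le_trans le_self_add hR) hA1fin
        have hB2fin : palF2 s t ≠ ⊤ := fin_of_le hU0B (fin_add_one hC'fin)
        have hB1fin : palF2 s (t + 1) ≠ ⊤ := fin_of_le hUB1 (fin_add_one hB2fin)
        obtain ⟨a1, ha1⟩ := exists_nat_of_ne_top hA1fin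
        obtain ⟨a2, ha2⟩ := exists_nat_of_ne_top hA2fin
        obtain ⟨b0, hb0⟩ := exists_nat_of_ne_top hB0fin
        obtain ⟨b1, hb1⟩ := exists_nat_of_ne_top hB1fin
        obtain ⟨b2, hb2⟩ := exists_nat_of_ne_top hB2fin
        obtain ⟨bp, hbp⟩ := exists_nat_of_ne_top hBpfin
        obtain ⟨c, hc⟩ := exists_nat_of_ne_top hC'fin
        rw [← hb0, ← ha2] at d1
        rw [← hb0, ← hb1] at d2
        rw [← hbp, ← ha1] at g1'
        rw [← hbp, ← hb0] at g2'
        rw [← hb2, ← hc] at hU0B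
        rw [← hb1, ← hb2] at hUB1
        rw [← hc, ← ha1] at hR
        have d1n : b0 = a2 + 1 := by exact_mod_cast d1
        have d2n : b0 + 3 ≤ b1 := by exact_mod_cast d2
        have g1n : bp = a1 + 1 := by exact_mod_cast g1'
        have g2n : bp + 3 ≤ b0 := by exact_mod_cast g2'
        have hU0Bn : b2 ≤ c + 1 := by exact_mod_cast hU0B
        have hUB1n : b1 ≤ b2 + 1 := by exact_mod_cast hUB1
        have hRn : c + 1 ≤ a1 := by exact_mod_cast hR
        omega
end
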